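/- Let G be a linear group (a subgroup of GL_N(k) for a field k) and let H be a normal subgroup of G that is closed in the Zariski topology induced on G. Then G/H is linear. -/

import Mathlib

set_option linter.unusedSectionVars false
set_option maxHeartbeats 1000000
set_option synthInstance.maxHeartbeats 400000

/-- A group is linear if it embeds in `GL_n(k)` for some field `k` and some `n`. -/
def IsLinearGroup (G : Type*) [Group G] : Prop :=
  ∃ (k : Type) (_ : Field k) (n : ℕ) (ρ : G →* Matrix.GeneralLinearGroup (Fin n) k),
    Function.Injective ρ

namespace Stmt8

open MvPolynomial ExteriorAlgebra Module

section PolyPart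

variable {k : Type} [Field k] {n : ℕ}


variable {k : Type} [Field k] {n : ℕ}

noncomputable def sub (A : Matrix (Fin n) (Fin n) k) :
    MvPolynomial (Fin n × Fin n) k →ₐ[k] MvPolynomial (Fin n × Fin n) k :=
  aeval (fun p => ∑ l, A l p.2 • X (p.1, l))

lemma sub_X (A : Matrix (Fin n) (Fin n) k) (i j : Fin n) :
    sub A (X (i, j)) = ∑ l, A l j • X (i, l) := by
  simp [sub]

lemma sub_comp (A B : Matrix (Fin n) (Fin n) k) :
    (sub A).comp (sub B) = sub (A * B) := by
  apply MvPolynomial.algHom_ext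
  rintro ⟨i, j⟩
  simp only [AlgHom.comp_apply, sub_X, map_sum, map_smul, Matrix.mul_apply]
  simp only [Finset.smul_sum, smul_smul]
  rw [Finset.sum_comm]
  simp only [Finset.sum_smul]
  refine Finset.sum_congr rfl fun l _ => Finset.sum_congr rfl fun m _ => ?_
  rw [mul_comm]

lemma sub_sub (A B : Matrix (Fin n) (Fin n) k) (f : MvPolynomial (Fin n × Fin n) k) :
    sub A (sub B f) = sub (A * B) f := by
  rw [← sub_comp]; rfl

lemma sub_one : sub (1 : Matrix (Fin n) (Fin n) k) = AlgHom.id k _ := by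
  apply MvPolynomial.algHom_ext
  rintro ⟨i, j⟩
  simp [sub_X, Matrix.one_apply]

lemma sub_one_apply (f : MvPolynomial (Fin n × Fin n) k) :
    sub (1 : Matrix (Fin n) (Fin n) k) f = f := by
  rw [sub_one]; rfl

noncomputable def evalm (M : Matrix (Fin n) (Fin n) k) :
    MvPolynomial (Fin n × Fin n) k →+* k :=
  eval (fun p => M p.1 p.2)

lemma evalm_sub (M A : Matrix (Fin n) (Fin n) k) (f : MvPolynomial (Fin n × Fin n) k) :
    evalm M (sub A f) = evalm (M * A) f := by
  have : (RingHom.comp (evalm M) (sub A : MvPolynomial (Fin n × Fin n) k →+* _)) = evalm (M * A) := by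
    apply MvPolynomial.ringHom_ext
    · intro a; simp [evalm, sub]
    · rintro ⟨i, j⟩
      simp [evalm, sub_X, Matrix.mul_apply, mul_comm]
  exact congrFun (congrArg DFunLike.coe this) f

lemma totalDegree_sub_le (A : Matrix (Fin n) (Fin n) k) (f : MvPolynomial (Fin n × Fin n) k) :
    (sub A f).totalDegree ≤ f.totalDegree := by
  conv_lhs => rw [← support_sum_monomial_coeff f]
  rw [map_sum]
  refine (totalDegree_finset_sum _ _).trans ?_
  refine Finset.sup_le fun s hs => ?_
  rw [sub, aeval_monomial]
  refine (totalDegree_mul _ _).trans ?_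
  have h1 : (algebraMap k (MvPolynomial (Fin n × Fin n) k) (coeff s f)).totalDegree = 0 := by
    simp [MvPolynomial.algebraMap_eq]
  rw [h1, zero_add]
  rw [Finsupp.prod]
  refine le_trans (totalDegree_finset_prod _ _) ?_
  have h2 : ∀ p : Fin n × Fin n, (∑ l, A l p.2 • X (p.1, l) : MvPolynomial (Fin n × Fin n) k).totalDegree ≤ 1 := by
    intro p
    refine (totalDegree_finset_sum _ _).trans ?_
    refine Finset.sup_le fun l _ => ?_
    exact (totalDegree_smul_le _ _).trans (le_of_eq (totalDegree_X _))
  refine le_trans (Finset.sum_le_sum fun p _ => (totalDegree_pow _ _).trans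
    (by exact Nat.mul_le_mul_left _ (h2 p))) ?_
  simp only [mul_one]
  exact le_totalDegree hs

variable (G : Subgroup (Matrix.GeneralLinearGroup (Fin n) k))

def mat (g : ↥G) : Matrix (Fin n) (Fin n) k :=
  ((g : Matrix.GeneralLinearGroup (Fin n) k) : Matrix (Fin n) (Fin n) k)

lemma mat_mul (g g' : ↥G) : mat G (g * g') = mat G g * mat G g' := rfl

lemma mat_one : mat G (1 : ↥G) = 1 := rfl

variable {G}

lemma lemB (H : Subgroup ↥G)
    (hclosed : ∃ S : Set (MvPolynomial (Fin n × Fin n) k), ∀ g : ↥G,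
      g ∈ H ↔ ∀ p ∈ S, evalm (mat G g) p = 0) :
    ∃ (W M : Submodule k (MvPolynomial (Fin n × Fin n) k)), M ≤ W ∧ FiniteDimensional k ↥W ∧
      (∀ g : ↥G, ∀ f ∈ W, sub (mat G g) f ∈ W) ∧
      (∀ g : ↥G, g ∈ H → ∀ f ∈ M, sub (mat G g) f ∈ M) ∧
      (∀ g : ↥G, (∀ f ∈ M, sub (mat G g) f ∈ M) → g ∈ H) := by
  obtain ⟨S, hS⟩ := hclosed
  set J : Ideal (MvPolynomial (Fin n × Fin n) k) := ⨅ (h : ↥G) (_ : h ∈ H), RingHom.ker (evalm (mat G h)) with hJdef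
  have memJ : ∀ f : MvPolynomial (Fin n × Fin n) k, f ∈ J ↔ ∀ h : ↥G, h ∈ H → evalm (mat G h) f = 0 := by
    intro f
    simp [hJdef, Ideal.mem_iInf, RingHom.mem_ker]
  set I : Ideal (MvPolynomial (Fin n × Fin n) k) := Ideal.span S with hIdef
  have hGI : ∀ g : ↥G, g ∈ H ↔ ∀ f ∈ I, evalm (mat G g) f = 0 := by
    intro g
    constructor
    · intro hg f hf
      have : I ≤ RingHom.ker (evalm (mat G g)) := by
        rw [hIdef, Ideal.span_le]
        intro p hp
        exact (hS g).1 hg p hp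
      exact this hf
    · intro hf
      exact (hS g).2 fun p hp => hf p (Ideal.subset_span hp)
  have hIJ : I ≤ J := by
    rw [hIdef, Ideal.span_le]
    intro p hp
    rw [SetLike.mem_coe, memJ]
    intro h hh
    exact (hS h).1 hh p hp
  obtain ⟨TI, hTI⟩ := (IsNoetherian.noetherian I : I.FG)
  obtain ⟨TJ, hTJ⟩ := (IsNoetherian.noetherian J : J.FG)
  set d : ℕ := max (TI.sup totalDegree) (TJ.sup totalDegree) with hd
  set W := restrictTotalDegree (Fin n × Fin n) k d with hW
  set M : Submodule k (MvPolynomial (Fin n × Fin n) k) := (Submodule.restrictScalars k J) ⊓ W with hM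
  have hMW : M ≤ W := inf_le_right
  have hWfd : FiniteDimensional k ↥W := by
    rw [hW]
    infer_instance
  have hWstab : ∀ g : ↥G, ∀ f ∈ W, sub (mat G g) f ∈ W := by
    intro g f hf
    rw [hW, mem_restrictTotalDegree] at hf ⊢
    exact (totalDegree_sub_le _ _).trans hf
  refine ⟨W, M, hMW, hWfd, hWstab, ?_, ?_⟩
  · intro g hg f hf
    rw [hM, Submodule.mem_inf] at hf
    obtain ⟨hfJ, hfW⟩ := hf
    rw [hM, Submodule.mem_inf]
    constructor
    · rw [Submodule.restrictScalars_mem, memJ] at hfJ ⊢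
      intro h hh
      rw [evalm_sub, ← mat_mul]
      exact hfJ _ (H.mul_mem hh hg)
    · rw [hW, mem_restrictTotalDegree] at hfW ⊢
      exact (totalDegree_sub_le _ _).trans hfW
  · intro g hg
    rw [hGI]
    intro f hf
    have : I ≤ RingHom.ker (evalm (mat G g)) := by
      rw [← hTI]
      rw [show (Submodule.span (MvPolynomial (Fin n × Fin n) k) (↑TI : Set (MvPolynomial (Fin n × Fin n) k)) : Ideal (MvPolynomial (Fin n × Fin n) k)) = Ideal.span ↑TI from rfl, Ideal.span_le]
      intro p hp
      have hpM : p ∈ M := by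
        rw [hM, Submodule.mem_inf]
        constructor
        · exact hIJ (hTI ▸ Submodule.subset_span hp)
        · rw [hW, mem_restrictTotalDegree]
          exact le_trans (Finset.le_sup hp) (le_max_left _ _)
      have h0 := hg p hpM
      rw [hM, Submodule.mem_inf] at h0
      have := h0.1
      rw [Submodule.restrictScalars_mem, memJ] at this
      have h1 := this 1 H.one_mem
      rw [evalm_sub, mat_one, one_mul] at h1
      exact h1
    exact this hf


end PolyPart

section ExtPart

variable {k : Type} [Field k] {V : Type} [AddCommGroup V] [Module k V] [FiniteDimensional k V]

lemma cons_mul (v : V) {d : ℕ} (w : Fin d → V) :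
    ExteriorAlgebra.ι k v * ιMulti k d w = ιMulti k (d + 1) (Fin.cons v w) := by
  have h := ιMulti_succ_apply (R := k) (v := (Fin.cons v w : Fin (d+1) → V))
  rw [h, Fin.cons_zero]
  congr 1

lemma wedge_props (P : Submodule k V) :
    ∃ ω : ExteriorAlgebra k V, ω ≠ 0 ∧
      (∀ v : V, ExteriorAlgebra.ι k v * ω = 0 ↔ v ∈ P) ∧
      (∀ w : Fin (finrank k ↥P) → V, (∀ i, w i ∈ P) →
        ιMulti k (finrank k ↥P) w ∈ Submodule.span k {ω}) ∧
      (∃ vv : Fin (finrank k ↥P) → V, (∀ i, vv i ∈ P) ∧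
        ω = ιMulti k (finrank k ↥P) vv) := by
  classical
  set d := finrank k ↥P with hd
  let bP : Basis (Fin d) k ↥P := finBasis k ↥P
  set bc : Fin d → V := fun i => ↑(bP i) with hbc
  have hbcP : ∀ i, bc i ∈ P := fun i => (bP i).2
  set ω : ExteriorAlgebra k V := ιMulti k d bc with hω
  obtain ⟨Q, hQ⟩ := Submodule.exists_isCompl P
  set pr := P.projectionOnto Q hQ with hpr
  set η : Fin d → (V →ₗ[k] k) := fun i => (bP.coord i) ∘ₗ pr with hη
  have hηb : ∀ i j, η j (bc i) = (1 : Matrix (Fin d) (Fin d) k) i j := by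
    intro i j
    simp only [hη, LinearMap.comp_apply, hbc]
    rw [hpr, Submodule.linearProjOfIsCompl_apply_left]
    rw [Basis.coord_apply, Basis.repr_self]
    rw [Finsupp.single_apply, Matrix.one_apply, eq_comm]
  -- ω ≠ 0
  have hωne : ω ≠ 0 := by
    set F0 : V [⋀^Fin d]→ₗ[k] k :=
      (Matrix.detRowAlternating : (Fin d → k) [⋀^Fin d]→ₗ[k] k).compLinearMap
        (LinearMap.pi η) with hF0
    set lf := ExteriorAlgebra.liftAlternating (R := k) (M := V) (N := k)
      (Function.update (fun _ => 0) d F0) with hlf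
    have h1 : lf ω = 1 := by
      rw [hω, hlf, ExteriorAlgebra.liftAlternating_apply_ιMulti, Function.update_self]
      rw [hF0]
      have : (Matrix.of fun i j => (LinearMap.pi η) (bc i) j) = (1 : Matrix (Fin d) (Fin d) k) := by
        ext i j
        simp only [Matrix.of_apply, LinearMap.pi_apply]
        exact hηb i j
      show Matrix.detRowAlternating (fun i => (LinearMap.pi η) (bc i)) = 1
      show Matrix.det (Matrix.of fun i j => (LinearMap.pi η) (bc i) j) = 1
      rw [this, Matrix.det_one]
    intro h
    rw [h, map_zero] at h1
    exact zero_ne_one h1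
  -- the annihilator characterization
  have hann : ∀ v : V, ExteriorAlgebra.ι k v * ω = 0 ↔ v ∈ P := by
    intro v
    constructor
    · intro h0
      by_contra hv
      obtain ⟨ξ, hξv, hξP'⟩ := Submodule.exists_dual_map_eq_bot_of_notMem hv inferInstance
      have hξP : ∀ m ∈ P, ξ m = 0 := by
        intro m hm
        have : ξ m ∈ P.map ξ := Submodule.mem_map_of_mem hm
        rw [hξP'] at this
        exact (Submodule.mem_bot k).1 this
      set Φ1 : V →ₗ[k] (Fin (d+1) → k) := LinearMap.pi (Fin.cons ξ η) with hΦ1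
      set F1 : V [⋀^Fin (d+1)]→ₗ[k] k :=
        (Matrix.detRowAlternating : (Fin (d+1) → k) [⋀^Fin (d+1)]→ₗ[k] k).compLinearMap Φ1 with hF1
      set lf := ExteriorAlgebra.liftAlternating (R := k) (M := V) (N := k)
        (Function.update (fun _ => 0) (d+1) F1) with hlf
      have h2 : lf (ExteriorAlgebra.ι k v * ω) = ξ v := by
        rw [hω, cons_mul, hlf, ExteriorAlgebra.liftAlternating_apply_ιMulti, Function.update_self]
        show Matrix.det (Matrix.of fun i j => Φ1 ((Fin.cons v bc : Fin (d+1) → V) i) j) = ξ v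
        rw [Matrix.det_succ_column_zero]
        rw [Finset.sum_eq_single 0]
        · have e1 : (Matrix.of fun i j => Φ1 ((Fin.cons v bc : Fin (d+1) → V) i) j) 0 0 = ξ v := by
            simp [hΦ1]
          have e2 : ((Matrix.of fun i j => Φ1 ((Fin.cons v bc : Fin (d+1) → V) i) j).submatrix
              (Fin.succAbove 0) Fin.succ) = (1 : Matrix (Fin d) (Fin d) k) := by
            ext i j
            simp only [Matrix.submatrix_apply, Matrix.of_apply]
            rw [Fin.succAbove_zero]
            show Φ1 ((Fin.cons v bc : Fin (d+1) → V) i.succ) j.succ = _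
            rw [Fin.cons_succ]
            simp only [hΦ1, LinearMap.pi_apply, Fin.cons_succ]
            exact hηb i j
          rw [e1, e2, Matrix.det_one]
          simp
        · intro i _ hi
          obtain ⟨i', rfl⟩ := Fin.exists_succ_eq.2 hi
          have e3 : (Matrix.of fun i j => Φ1 ((Fin.cons v bc : Fin (d+1) → V) i) j) i'.succ 0 = 0 := by
            simp only [Matrix.of_apply, hΦ1, LinearMap.pi_apply, Fin.cons_succ, Fin.cons_zero]
            exact hξP _ (hbcP i')
          rw [e3]
          ring
        · simp
      rw [h0, map_zero] at h2
      exact hξv h2.symm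
    · intro hv
      have hrepr : v = ∑ i, (bP.repr ⟨v, hv⟩ i) • bc i := by
        have := congrArg (Subtype.val) (bP.sum_repr ⟨v, hv⟩)
        simp only [AddSubmonoidClass.coe_finset_sum, SetLike.val_smul] at this
        exact this.symm
      rw [hrepr, map_sum]
      rw [Finset.sum_mul]
      refine Finset.sum_eq_zero fun i _ => ?_
      rw [map_smul, smul_mul_assoc]
      have : ExteriorAlgebra.ι k (bc i) * ω = 0 := by
        rw [hω, cons_mul]
        exact AlternatingMap.map_eq_zero_of_eq _ _
          (by rw [Fin.cons_zero, Fin.cons_succ]) (Fin.succ_ne_zero i).symm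
      rw [this, smul_zero]
  refine ⟨ω, hωne, hann, ?_, bc, hbcP, rfl⟩
  -- wedges of vectors in P lie in the span of ω
  intro w hw
  have hrepr : ∀ i, w i = ∑ j, (bP.repr ⟨w i, hw i⟩ j) • bc j := by
    intro i
    have := congrArg (Subtype.val) (bP.sum_repr ⟨w i, hw i⟩)
    simp only [AddSubmonoidClass.coe_finset_sum, SetLike.val_smul] at this
    exact this.symm
  have hw' : ιMulti k d w = ιMulti k d (fun i => ∑ j, (bP.repr ⟨w i, hw i⟩ j) • bc j) := by
    congr 1
    funext i
    exact hrepr i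
  rw [hw']
  rw [show (ιMulti k d (M := V)) (fun i => ∑ j, (bP.repr ⟨w i, hw i⟩ j) • bc j)
      = (ιMulti k d (M := V)).toMultilinearMap (fun i => ∑ j, (bP.repr ⟨w i, hw i⟩ j) • bc j)
      from rfl]
  rw [MultilinearMap.map_sum (ιMulti k d (M := V)).toMultilinearMap
    (fun i j => (bP.repr ⟨w i, hw i⟩ j) • bc j)]
  refine Submodule.sum_mem _ fun r _ => ?_
  have hsm : (ιMulti k d (M := V)).toMultilinearMap (fun i => (bP.repr ⟨w i, hw i⟩ (r i)) • bc (r i))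
      = (∏ i, bP.repr ⟨w i, hw i⟩ (r i)) • ιMulti k d (fun i => bc (r i)) :=
    MultilinearMap.map_smul_univ _ _ _
  rw [hsm]
  refine Submodule.smul_mem _ _ ?_
  by_cases hr : Function.Injective r
  · have hbij : Function.Bijective r := (Finite.injective_iff_bijective).1 hr
    set e := Equiv.ofBijective r hbij with he
    have : (fun i => bc (r i)) = bc ∘ e := rfl
    rw [this, AlternatingMap.map_perm]
    rcases Int.units_eq_one_or (Equiv.Perm.sign e) with h | h
    · rw [h, one_smul]
      exact Submodule.mem_span_singleton_self ω
    · rw [h]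
      rw [Units.neg_smul, one_smul]
      exact Submodule.neg_mem _ (Submodule.mem_span_singleton_self ω)
  · rw [Function.not_injective_iff] at hr
    obtain ⟨i, j, hij, hne⟩ := hr
    rw [AlternatingMap.map_eq_zero_of_eq _ _ (by rw [hij]) hne]
    exact Submodule.zero_mem _


section Defs

variable {Γ : Type*} [Group Γ] (π : Γ →* (Module.End k V)ˣ)

/-- The action of `Γ` on the exterior algebra. -/
noncomputable def tau (g : Γ) : ExteriorAlgebra k V →ₐ[k] ExteriorAlgebra k V :=
  ExteriorAlgebra.map ((π g : Module.End k V) : V →ₗ[k] V)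

lemma tau_mul (g g' : Γ) (x : ExteriorAlgebra k V) :
    tau π g (tau π g' x) = tau π (g * g') x := by
  have h1 : (ExteriorAlgebra.map ((π g : Module.End k V) : V →ₗ[k] V)).comp
      (ExteriorAlgebra.map ((π g' : Module.End k V) : V →ₗ[k] V)) =
      ExteriorAlgebra.map ((π (g * g') : Module.End k V) : V →ₗ[k] V) := by
    rw [ExteriorAlgebra.map_comp_map]
    congr 1
    rw [map_mul]
    rfl
  exact congrArg (fun F => F x) (congrArg (DFunLike.coe) h1)

lemma tau_one (x : ExteriorAlgebra k V) : tau π (1 : Γ) x = x := by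
  have h1 : ((π (1 : Γ) : Module.End k V) : V →ₗ[k] V) = LinearMap.id := by
    rw [map_one]; rfl
  rw [tau]
  simp only [h1, ExteriorAlgebra.map_id]
  rfl

/-- A finite-dimensional subspace of the exterior algebra containing all `d`-fold wedges. -/
noncomputable def VVS (d : ℕ) : Submodule k (ExteriorAlgebra k V) :=
  Submodule.span k (Set.range fun r : Fin d → Fin (finrank k V) =>
    ιMulti k d (fun i => (finBasis k V) (r i)))

instance VVS_fd (d : ℕ) : FiniteDimensional k ↥(VVS (k := k) (V := V) d) :=
  FiniteDimensional.span_of_finite k (Set.finite_range _)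

lemma wedge_mem_VVS (d : ℕ) (w : Fin d → V) : ιMulti k d w ∈ VVS (k := k) (V := V) d := by
  classical
  set bV : Basis (Fin (finrank k V)) k V := finBasis k V with hbV
  have hw' : ιMulti k d w = (ιMulti k d (M := V)).toMultilinearMap
      (fun i => ∑ j, (bV.repr (w i)) j • bV j) := by
    show _ = ιMulti k d (M := V) (fun i => ∑ j, (bV.repr (w i)) j • bV j)
    congr 1
    funext i
    exact (bV.sum_repr (w i)).symm
  rw [hw', MultilinearMap.map_sum]
  refine Submodule.sum_mem _ fun r _ => ?_
  rw [MultilinearMap.map_smul_univ]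
  exact Submodule.smul_mem _ _ (Submodule.subset_span ⟨r, rfl⟩)

lemma VVS_stab (d : ℕ) (g : Γ) : ∀ x ∈ VVS (k := k) (V := V) d, tau π g x ∈ VVS (k := k) (V := V) d := by
  intro x hx
  refine Submodule.span_induction (p := fun y _ => tau π g y ∈ VVS (k := k) (V := V) d)
    ?_ ?_ ?_ ?_ hx
  · rintro y ⟨r, rfl⟩
    rw [tau, ExteriorAlgebra.map_apply_ιMulti]
    exact wedge_mem_VVS d _
  · show tau π g 0 ∈ _
    rw [map_zero]; exact Submodule.zero_mem _
  · intro y z _ _ hy hz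
    show tau π g (y + z) ∈ _
    rw [map_add]; exact Submodule.add_mem _ hy hz
  · intro a y _ hy
    show tau π g (a • y) ∈ _
    rw [map_smul]; exact Submodule.smul_mem _ _ hy

variable (H : Subgroup Γ)

/-- Simultaneous eigenspace for a "character" `c` on `H`, inside `VVS d`. -/
noncomputable def VcS (d : ℕ) (c : ↥H → k) : Submodule k (ExteriorAlgebra k V) where
  carrier := {x | x ∈ VVS (k := k) (V := V) d ∧ ∀ h : ↥H, tau π ↑h x = c h • x}
  zero_mem' := ⟨Submodule.zero_mem _, fun h => by rw [map_zero, smul_zero]⟩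
  add_mem' := by
    rintro a b ⟨haV, ha⟩ ⟨hbV, hb⟩
    exact ⟨Submodule.add_mem _ haV hbV, fun h => by rw [map_add, ha h, hb h, smul_add]⟩
  smul_mem' := by
    rintro a x ⟨hxV, hx⟩
    exact ⟨Submodule.smul_mem _ _ hxV, fun h => by rw [map_smul, hx h, smul_comm]⟩

lemma memVcS (d : ℕ) (c : ↥H → k) (x : ExteriorAlgebra k V) :
    x ∈ VcS π H d c ↔ x ∈ VVS (k := k) (V := V) d ∧ ∀ h : ↥H, tau π ↑h x = c h • x :=
  Iff.rfl

lemma actmem (hH : H.Normal) (g : Γ) (h : ↥H) : g⁻¹ * ↑h * g ∈ H := by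
  have := hH.conj_mem ↑h h.2 g⁻¹
  simpa [mul_assoc] using this

/-- Conjugation action on characters. -/
def actC (hH : H.Normal) (g : Γ) (c : ↥H → k) : ↥H → k := fun h => c ⟨g⁻¹ * ↑h * g, actmem H hH g h⟩

lemma actC_actC_inv (hH : H.Normal) (g : Γ) (c : ↥H → k) : actC H hH g (actC H hH g⁻¹ c) = c := by
  funext h
  show c ⟨g⁻¹⁻¹ * (g⁻¹ * ↑h * g) * g⁻¹, _⟩ = c h
  congr 1
  apply Subtype.ext
  show g⁻¹⁻¹ * (g⁻¹ * ↑h * g) * g⁻¹ = ↑h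
  group

lemma VcS_map (hH : H.Normal) (d : ℕ) (g : Γ) (c : ↥H → k) :
    ∀ x ∈ VcS π H d c, tau π g x ∈ VcS π H d (actC H hH g c) := by
  intro x hx
  rw [memVcS] at hx ⊢
  refine ⟨VVS_stab π d g x hx.1, fun h => ?_⟩
  have h1 : (↑h : Γ) * g = g * (g⁻¹ * ↑h * g) := by group
  rw [tau_mul, h1, ← tau_mul]
  have h2 := hx.2 ⟨g⁻¹ * ↑h * g, actmem H hH g h⟩
  rw [h2, map_smul]
  rfl

/-- The (finite-dimensional) sum of all the simultaneous eigenspaces. -/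
noncomputable def V'S (d : ℕ) : Submodule k (ExteriorAlgebra k V) :=
  ⨆ c : (↥H → k), VcS π H d c

lemma VcS_le_V'S (d : ℕ) (c : ↥H → k) : VcS π H d c ≤ V'S π H d := le_iSup _ c

lemma V'S_le_VVS (d : ℕ) : V'S π H d ≤ VVS (k := k) (V := V) d :=
  iSup_le fun c x hx => ((memVcS π H d c x).1 hx).1

instance V'S_fd (d : ℕ) : FiniteDimensional k ↥(V'S π H d) :=
  Submodule.finiteDimensional_of_le (V'S_le_VVS π H d)

lemma V'S_stab (hH : H.Normal) (d : ℕ) (g : Γ) : ∀ x ∈ V'S π H d, tau π g x ∈ V'S π H d := by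
  intro x hx
  refine Submodule.iSup_induction (motive := fun y => tau π g y ∈ V'S π H d) _ hx ?_ ?_ ?_
  · intro c y hy
    exact VcS_le_V'S π H d (actC H hH g c) (VcS_map π H hH d g c y hy)
  · show tau π g 0 ∈ _
    rw [map_zero]; exact Submodule.zero_mem _
  · intro y z hy hz
    show tau π g (y + z) ∈ _
    rw [map_add]; exact Submodule.add_mem _ hy hz

/-- The restricted action on `V'S`. -/
noncomputable def rTm (hH : H.Normal) (d : ℕ) (g : Γ) : Module.End k ↥(V'S π H d) :=
  (tau π g).toLinearMap.restrict (p := V'S π H d) (q := V'S π H d)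
    (fun x hx => V'S_stab π H hH d g x hx)

lemma rTm_apply (hH : H.Normal) (d : ℕ) (g : Γ) (x : ↥(V'S π H d)) :
    (rTm π H hH d g x : ExteriorAlgebra k V) = tau π g ↑x := rfl

lemma rTm_mul (hH : H.Normal) (d : ℕ) (g g' : Γ) :
    rTm π H hH d g * rTm π H hH d g' = rTm π H hH d (g * g') := by
  ext x
  show ((rTm π H hH d g) ((rTm π H hH d g') x) : ExteriorAlgebra k V) = _
  rw [rTm_apply, rTm_apply, rTm_apply, tau_mul]

lemma rTm_one (hH : H.Normal) (d : ℕ) : rTm π H hH d (1 : Γ) = 1 := by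
  ext x
  show ((rTm π H hH d 1) x : ExteriorAlgebra k V) = ↑x
  rw [rTm_apply, tau_one]

/-- Eigenspaces inside `V'S`. -/
noncomputable def WcS (d : ℕ) (c : ↥H → k) : Submodule k ↥(V'S π H d) :=
  (VcS π H d c).comap (V'S π H d).subtype

lemma memWcS (d : ℕ) (c : ↥H → k) (x : ↥(V'S π H d)) :
    x ∈ WcS π H d c ↔ (x : ExteriorAlgebra k V) ∈ VcS π H d c := Iff.rfl

lemma WcS_rTm (hH : H.Normal) (d : ℕ) (g : Γ) (c : ↥H → k) :
    ∀ x ∈ WcS π H d c, rTm π H hH d g x ∈ WcS π H d (actC H hH g c) := by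
  intro x hx
  rw [memWcS] at hx ⊢
  rw [rTm_apply]
  exact VcS_map π H hH d g c _ hx

lemma WcS_scal (hH : H.Normal) (d : ℕ) (c : ↥H → k) (h : ↥H) :
    ∀ x ∈ WcS π H d c, rTm π H hH d ↑h x = c h • x := by
  intro x hx
  apply Subtype.ext
  rw [rTm_apply]
  rw [memWcS] at hx
  rw [((memVcS π H d c ↑x).1 hx).2 h]
  rfl

lemma WcS_sup (d : ℕ) : (⨆ c : (↥H → k), WcS π H d c) = ⊤ := by
  apply Submodule.map_injective_of_injective (V'S π H d).injective_subtype
  rw [Submodule.map_iSup, Submodule.map_subtype_top]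
  have h1 : ∀ c, Submodule.map (V'S π H d).subtype (WcS π H d c) = VcS π H d c := by
    intro c
    rw [WcS, Submodule.map_comap_subtype]
    exact inf_of_le_right (VcS_le_V'S π H d c)
  exact (iSup_congr h1).trans rfl

/-- The independence of the simultaneous eigenspaces. -/
lemma WcS_disjoint (hH : H.Normal) (d : ℕ) (c₀ : ↥H → k) :
    Disjoint (WcS π H d c₀) (⨆ c : {c : ↥H → k // c ≠ c₀}, WcS π H d ↑c) := by
  classical
  rw [Submodule.disjoint_def]
  intro x hxχ hxO
  obtain ⟨f, hf⟩ := (Submodule.mem_iSup_iff_exists_dfinsupp' _ x).1 hxO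
  have claim : ∀ (s : Finset {c : ↥H → k // c ≠ c₀})
      (v : ∀ i : {c : ↥H → k // c ≠ c₀}, ↥(WcS π H d ↑i)) (y : ↥(V'S π H d)),
      y ∈ WcS π H d c₀ → y = ∑ i ∈ s, ↑(v i) → y = 0 := by
    intro s
    induction s using Finset.induction_on with
    | empty => intro v y hy hsum; simpa using hsum
    | insert i₁ s' hnotmem ih =>
      intro v y hy hsum
      obtain ⟨hstar, hne⟩ : ∃ hstar : ↥H, (↑i₁ : ↥H → k) hstar ≠ c₀ hstar := by
        by_contra hcon
        push_neg at hcon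
        exact i₁.2 (funext hcon)
      set c₁ : k := (↑i₁ : ↥H → k) hstar with hc₁
      set T : Module.End k ↥(V'S π H d) := rTm π H hH d ↑hstar - c₁ • 1 with hT
      have hTx : ∀ (c : ↥H → k), ∀ z ∈ WcS π H d c, T z = (c hstar - c₁) • z := by
        intro c z hz
        rw [hT, LinearMap.sub_apply, LinearMap.smul_apply, Module.End.one_apply,
          WcS_scal π H hH d c hstar z hz]
        exact (sub_smul (c hstar) c₁ z).symm
      have hTy : T y = (c₀ hstar - c₁) • y := hTx c₀ y hy
      have hTsum : T y = ∑ i ∈ insert i₁ s', T ↑(v i) := by rw [hsum, map_sum]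
      rw [Finset.sum_insert hnotmem] at hTsum
      have hTv1 : T ↑(v i₁) = 0 := by
        rw [hTx ↑i₁ ↑(v i₁) (v i₁).2, hc₁, sub_self, zero_smul]
      rw [hTv1, zero_add] at hTsum
      set v' : ∀ i : {c : ↥H → k // c ≠ c₀}, ↥(WcS π H d ↑i) := fun i =>
        ⟨((↑i : ↥H → k) hstar - c₁) • ↑(v i), Submodule.smul_mem _ _ (v i).2⟩ with hv'
      have hsum' : (c₀ hstar - c₁) • y = ∑ i ∈ s', ↑(v' i) := by
        rw [← hTy, hTsum]
        refine Finset.sum_congr rfl fun i hi => ?_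
        exact hTx ↑i ↑(v i) (v i).2
      have h0 := ih v' ((c₀ hstar - c₁) • y) (Submodule.smul_mem _ _ hy) hsum'
      rcases smul_eq_zero.1 h0 with h | h
      · exact absurd h (sub_ne_zero.2 (Ne.symm hne))
      · exact h
  exact claim f.support (fun i => f i) x hxχ (by rw [← hf]; rfl)

lemma WcS_isCompl (hH : H.Normal) (d : ℕ) (c₀ : ↥H → k) :
    IsCompl (WcS π H d c₀) (⨆ c : {c : ↥H → k // c ≠ c₀}, WcS π H d ↑c) := by
  refine ⟨WcS_disjoint π H hH d c₀, ?_⟩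
  rw [codisjoint_iff, eq_top_iff, ← WcS_sup π H d]
  refine iSup_le fun c => ?_
  by_cases hc : c = c₀
  · rw [hc]; exact le_sup_left
  · exact le_trans (le_iSup (fun c : {c : ↥H → k // c ≠ c₀} => WcS π H d ↑c) ⟨c, hc⟩)
      le_sup_right

/-- The subalgebra (as a submodule) of eigenspace-preserving endomorphisms. -/
noncomputable def ES (d : ℕ) : Submodule k (Module.End k ↥(V'S π H d)) where
  carrier := {φ | ∀ c : (↥H → k), ∀ x ∈ WcS π H d c, φ x ∈ WcS π H d c}
  zero_mem' := fun c x _ => by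
    show (0 : Module.End k ↥(V'S π H d)) x ∈ WcS π H d c
    rw [LinearMap.zero_apply]; exact Submodule.zero_mem _
  add_mem' := by
    intro a b ha hb c x hx
    show (a + b) x ∈ WcS π H d c
    rw [LinearMap.add_apply]
    exact Submodule.add_mem _ (ha c x hx) (hb c x hx)
  smul_mem' := by
    intro a φ hφ c x hx
    show (a • φ) x ∈ WcS π H d c
    rw [LinearMap.smul_apply]
    exact Submodule.smul_mem _ _ (hφ c x hx)

lemma memES (d : ℕ) (φ : Module.End k ↥(V'S π H d)) :
    φ ∈ ES π H d ↔ ∀ c : (↥H → k), ∀ x ∈ WcS π H d c, φ x ∈ WcS π H d c := Iff.rfl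

lemma conj_mem_ES (hH : H.Normal) (d : ℕ) (g : Γ) (φ : Module.End k ↥(V'S π H d)) (hφ : φ ∈ ES π H d) :
    rTm π H hH d g * φ * rTm π H hH d g⁻¹ ∈ ES π H d := by
  intro c x hx
  show (rTm π H hH d g) (φ ((rTm π H hH d g⁻¹) x)) ∈ WcS π H d c
  have h1 := WcS_rTm π H hH d g⁻¹ c x hx
  have h2 := hφ _ _ h1
  have h3 := WcS_rTm π H hH d g _ _ h2
  rwa [actC_actC_inv] at h3

/-- Conjugation on `ES`. -/
noncomputable def rEm (hH : H.Normal) (d : ℕ) (g : Γ) : Module.End k ↥(ES π H d) :=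
  ((LinearMap.mulLeft k (rTm π H hH d g)).comp
    (LinearMap.mulRight k (rTm π H hH d g⁻¹))).restrict
    (p := ES π H d) (q := ES π H d) (by
      intro φ hφ
      have h1 : rTm π H hH d g * (φ * rTm π H hH d g⁻¹) =
          rTm π H hH d g * φ * rTm π H hH d g⁻¹ := (mul_assoc _ _ _).symm
      show rTm π H hH d g * (φ * rTm π H hH d g⁻¹) ∈ ES π H d
      rw [h1]
      exact conj_mem_ES π H hH d g φ hφ)

lemma rEm_apply (hH : H.Normal) (d : ℕ) (g : Γ) (φ : ↥(ES π H d)) :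
    (rEm π H hH d g φ : Module.End k ↥(V'S π H d)) =
      rTm π H hH d g * ↑φ * rTm π H hH d g⁻¹ := by
  show rTm π H hH d g * (↑φ * rTm π H hH d g⁻¹) = _
  rw [mul_assoc]

/-- The representation of `Γ` on `ES`. -/
noncomputable def fEh (hH : H.Normal) (d : ℕ) : Γ →* Module.End k ↥(ES π H d) where
  toFun := rEm π H hH d
  map_one' := by
    refine LinearMap.ext fun φ => Subtype.ext ?_
    rw [rEm_apply]
    show rTm π H hH d 1 * ↑φ * rTm π H hH d 1⁻¹ = ↑φ
    rw [inv_one, rTm_one, one_mul, mul_one]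
  map_mul' := by
    intro g g'
    refine LinearMap.ext fun φ => Subtype.ext ?_
    show (rEm π H hH d (g * g') φ : Module.End k ↥(V'S π H d)) =
      ((rEm π H hH d g) ((rEm π H hH d g') φ) : Module.End k ↥(V'S π H d))
    rw [rEm_apply, rEm_apply, rEm_apply]
    rw [← rTm_mul π H hH d g g', mul_inv_rev, ← rTm_mul π H hH d g'⁻¹ g⁻¹]
    simp only [mul_assoc]


lemma ker_ge (hH : H.Normal) (d : ℕ) (g : Γ) (hg : g ∈ H) : fEh π H hH d g = 1 := by
  refine LinearMap.ext fun φ => Subtype.ext ?_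
  show (rEm π H hH d g φ : Module.End k ↥(V'S π H d)) = ↑φ
  rw [rEm_apply]
  have hcomm : rTm π H hH d g * (↑φ : Module.End k ↥(V'S π H d)) = ↑φ * rTm π H hH d g := by
    apply LinearMap.ext
    intro x
    have hx : x ∈ ⨆ c : (↥H → k), WcS π H d c := by
      rw [WcS_sup]; exact Submodule.mem_top
    refine Submodule.iSup_induction (WcS π H d)
      (motive := fun y => (rTm π H hH d g * (↑φ : Module.End k ↥(V'S π H d))) y
        = ((↑φ : Module.End k ↥(V'S π H d)) * rTm π H hH d g) y) hx ?_ ?_ ?_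
    · intro c y hy
      show rTm π H hH d g (φ.1 y) = φ.1 (rTm π H hH d g y)
      have h1 : rTm π H hH d g y = c ⟨g, hg⟩ • y := WcS_scal π H hH d c ⟨g, hg⟩ y hy
      have h2 : rTm π H hH d g (φ.1 y) = c ⟨g, hg⟩ • φ.1 y :=
        WcS_scal π H hH d c ⟨g, hg⟩ (φ.1 y) (φ.2 c y hy)
      rw [h1, h2, map_smul]
    · show (rTm π H hH d g * _) 0 = (_ * rTm π H hH d g) 0
      rw [map_zero, map_zero]
    · intro y z hy hz
      show (rTm π H hH d g * _) (y + z) = (_ * rTm π H hH d g) (y + z)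
      rw [map_add, map_add]
      exact congrArg₂ (· + ·) hy hz
  calc rTm π H hH d g * ↑φ * rTm π H hH d g⁻¹
      = ↑φ * rTm π H hH d g * rTm π H hH d g⁻¹ := by rw [hcomm]
    _ = ↑φ * (rTm π H hH d g * rTm π H hH d g⁻¹) := by rw [mul_assoc]
    _ = ↑φ := by rw [rTm_mul, mul_inv_cancel, rTm_one, mul_one]

lemma ker_le (hH : H.Normal) (d : ℕ) (ω : ExteriorAlgebra k V) (χ : ↥H → k)
    (hωVc : ω ∈ VcS π H d χ) (g : Γ) (hg : fEh π H hH d g = 1) :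
    tau π g ω ∈ Submodule.span k {ω} := by
  classical
  have hωV' : ω ∈ V'S π H d := VcS_le_V'S π H d χ hωVc
  set ωT : ↥(V'S π H d) := ⟨ω, hωV'⟩ with hωT
  have hωTW : ωT ∈ WcS π H d χ := by rw [memWcS]; exact hωVc
  set OC : Submodule k ↥(V'S π H d) := ⨆ c : {c : ↥H → k // c ≠ χ}, WcS π H d ↑c with hOC
  have hcompl : IsCompl (WcS π H d χ) OC := WcS_isCompl π H hH d χ
  set πχ := (WcS π H d χ).projectionOnto OC hcompl with hπχ
  set ωW : ↥(WcS π H d χ) := ⟨ωT, hωTW⟩ with hωW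
  set LL : Submodule k ↥(WcS π H d χ) := Submodule.span k {ωW} with hLL
  obtain ⟨QL, hQL⟩ := Submodule.exists_isCompl (K := k) (V := ↥(WcS π H d χ)) LL
  set rL := Submodule.projectionOnto (E := ↥(WcS π H d χ)) LL QL hQL with hrL
  set φ₀ : Module.End k ↥(V'S π H d) :=
    (WcS π H d χ).subtype ∘ₗ LL.subtype ∘ₗ rL ∘ₗ πχ with hφ₀
  have hφ₀rng : ∀ x : ↥(V'S π H d), φ₀ x ∈ Submodule.span k ({ωT} : Set ↥(V'S π H d)) := by
    intro x
    rw [hφ₀]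
    simp only [LinearMap.comp_apply]
    obtain ⟨a, ha⟩ := Submodule.mem_span_singleton.1 (rL (πχ x)).2
    show ((rL (πχ x) : ↥(WcS π H d χ)) : ↥(V'S π H d)) ∈ _
    rw [← ha, Submodule.coe_smul]
    exact Submodule.smul_mem _ _ (Submodule.mem_span_singleton_self ωT)
  have hφ₀ω : φ₀ ωT = ωT := by
    rw [hφ₀]
    simp only [LinearMap.comp_apply]
    have h1 : πχ ωT = ωW := Submodule.linearProjOfIsCompl_apply_left hcompl ωW
    rw [h1]
    have h2 : rL ωW = ⟨ωW, Submodule.mem_span_singleton_self ωW⟩ :=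
      Submodule.linearProjOfIsCompl_apply_left (E := ↥(WcS π H d χ)) hQL
        (⟨ωW, Submodule.mem_span_singleton_self ωW⟩ : ↥LL)
    rw [h2]
    rfl
  have hφ₀E : φ₀ ∈ ES π H d := by
    intro c x hx
    by_cases hc : c = χ
    · subst hc
      refine (show Submodule.span k ({ωT} : Set ↥(V'S π H d)) ≤ WcS π H d c from ?_) (hφ₀rng x)
      rw [Submodule.span_le, Set.singleton_subset_iff]
      exact hωTW
    · have hxO : x ∈ OC :=
        le_iSup (fun c : {c : ↥H → k // c ≠ χ} => WcS π H d ↑c) ⟨c, hc⟩ hx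
      have h1 : πχ x = 0 := Submodule.linearProjOfIsCompl_apply_right' hcompl hxO
      rw [hφ₀]
      simp only [LinearMap.comp_apply, h1, map_zero]
      exact Submodule.zero_mem _
  -- use the hypothesis
  have hval : rTm π H hH d g * φ₀ * rTm π H hH d g⁻¹ = φ₀ := by
    have h0 : (rEm π H hH d g ⟨φ₀, hφ₀E⟩ : Module.End k ↥(V'S π H d)) = φ₀ := by
      rw [show rEm π H hH d g (⟨φ₀, hφ₀E⟩ : ↥(ES π H d)) = (fEh π H hH d) g ⟨φ₀, hφ₀E⟩ from rfl,
        hg]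
      rfl
    rw [rEm_apply] at h0
    exact h0
  have hfix : φ₀ (rTm π H hH d g ωT) = rTm π H hH d g ωT := by
    have h3 := LinearMap.congr_fun hval (rTm π H hH d g ωT)
    have h1 : (rTm π H hH d g * φ₀ * rTm π H hH d g⁻¹) (rTm π H hH d g ωT)
        = rTm π H hH d g (φ₀ ((rTm π H hH d g⁻¹ * rTm π H hH d g) ωT)) := rfl
    rw [h1, rTm_mul, inv_mul_cancel, rTm_one] at h3
    have h2 : ((1 : Module.End k ↥(V'S π H d)) ωT) = ωT := rfl
    rw [h2, hφ₀ω] at h3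
    exact h3.symm
  obtain ⟨a, ha⟩ := Submodule.mem_span_singleton.1 (hfix ▸ hφ₀rng (rTm π H hH d g ωT))
  have hcoe : tau π g ω = (rTm π H hH d g ωT : ExteriorAlgebra k V) := (rTm_apply π H hH d g ωT).symm
  rw [hcoe, ← ha]
  rw [Submodule.coe_smul]
  exact Submodule.smul_mem _ _ (Submodule.mem_span_singleton_self ω)

noncomputable instance ES_acg (d : ℕ) : AddCommGroup ↥(ES π H d) :=
  @Submodule.addCommGroup k (Module.End k ↥(V'S π H d)) _
    (@LinearMap.addCommGroup k k ↥(V'S π H d) ↥(V'S π H d) _ _ _ _ _ _ _) _ (ES π H d)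

noncomputable instance ES_mod (d : ℕ) : @Module k ↥(ES π H d) _ AddCommGroup.toAddCommMonoid := (ES π H d).module

lemma lemC (hH : H.Normal) (P : Submodule k V)
    (hstab : ∀ g : Γ, g ∈ H → ∀ v ∈ P, (π g : Module.End k V) v ∈ P)
    (hdet : ∀ g : Γ, (∀ v ∈ P, (π g : Module.End k V) v ∈ P) → g ∈ H) :
    ∃ (m : ℕ) (ρ : Γ →* Matrix.GeneralLinearGroup (Fin m) k), ρ.ker = H := by
  classical
  set d := finrank k ↥P with hd
  obtain ⟨ω, hωne, hann, hspan, vv, hvvP, hωvv⟩ := wedge_props P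
  have Hchar : ∀ g : Γ, g ∈ H ↔ tau π g ω ∈ Submodule.span k {ω} := by
    intro g
    constructor
    · intro hg
      have h1 : tau π g ω = ιMulti k d (⇑(π g : Module.End k V) ∘ vv) := by
        rw [hωvv, tau, ExteriorAlgebra.map_apply_ιMulti]
      rw [h1]
      exact hspan _ fun i => hstab g hg _ (hvvP i)
    · intro hmem
      obtain ⟨a, ha⟩ := Submodule.mem_span_singleton.1 hmem
      have hane : a ≠ 0 := by
        intro h0
        rw [h0, zero_smul] at ha
        have h2 : ω = 0 := by
          have := congrArg (tau π g⁻¹) ha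
          rw [tau_mul, inv_mul_cancel, tau_one, map_zero] at this
          exact this.symm
        exact hωne h2
      refine hdet g fun v hv => ?_
      have h1 : ExteriorAlgebra.ι k ((π g : Module.End k V) v) * tau π g ω = 0 := by
        have h2 : tau π g (ExteriorAlgebra.ι k v * ω) = 0 := by
          rw [(hann v).2 hv, map_zero]
        rw [map_mul] at h2
        rwa [show tau π g (ExteriorAlgebra.ι k v)
          = ExteriorAlgebra.ι k ((π g : Module.End k V) v) from
          ExteriorAlgebra.map_apply_ι _ v] at h2
      rw [← ha, mul_smul_comm, smul_eq_zero] at h1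
      rcases h1 with h1 | h1
      · exact absurd h1 hane
      · exact (hann _).1 h1
  -- the character of H on ω
  set χ : ↥H → k := fun h => Classical.choose (Submodule.mem_span_singleton.1
    ((Hchar ↑h).1 h.2)) with hχdef
  have hχ : ∀ h : ↥H, tau π ↑h ω = χ h • ω := fun h =>
    (Classical.choose_spec (Submodule.mem_span_singleton.1 ((Hchar ↑h).1 h.2))).symm
  have hωVc : ω ∈ VcS π H d χ := ⟨hωvv ▸ wedge_mem_VVS d vv, hχ⟩
  -- the representation and its kernel
  set ρE : Γ →* (Module.End k ↥(ES π H d))ˣ := (fEh π H hH d).toHomUnits with hρE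
  have hker : ρE.ker = H := by
    ext g
    rw [MonoidHom.mem_ker]
    have hiff : ρE g = 1 ↔ fEh π H hH d g = 1 := by
      rw [Units.ext_iff]
      exact Iff.rfl
    rw [hiff]
    constructor
    · intro hg
      exact (Hchar g).2 (ker_le π H hH d ω χ hωVc g hg)
    · exact ker_ge π H hH d g
  -- convert to matrices
  haveI hfd1 : FiniteDimensional k ↥(V'S π H d) := V'S_fd π H d
  haveI hfd2 : FiniteDimensional k (Module.End k ↥(V'S π H d)) := by infer_instance
  haveI hfd3 : FiniteDimensional k ↥(ES π H d) := by infer_instance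
  haveI hfree : Module.Free k ↥(ES π H d) := Module.Free.of_divisionRing k ↥(ES π H d)
  set m := finrank k ↥(ES π H d) with hm
  set bE : Basis (Fin m) k ↥(ES π H d) := finBasis k ↥(ES π H d) with hbE
  set algE := LinearMap.toMatrixAlgEquiv bE with halgE
  set mulE : (Module.End k ↥(ES π H d))ˣ ≃* (Matrix (Fin m) (Fin m) k)ˣ :=
    Units.mapEquiv algE.toRingEquiv.toMulEquiv with hmulE
  refine ⟨m, mulE.toMonoidHom.comp ρE, ?_⟩
  ext g
  rw [MonoidHom.mem_ker, MonoidHom.comp_apply]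
  rw [show (mulE.toMonoidHom (ρE g) = 1) ↔ (ρE g = 1) from by
    constructor
    · intro h
      have := congrArg mulE.symm h
      rw [MulEquiv.coe_toMonoidHom] at this
      rw [MulEquiv.symm_apply_apply, map_one] at this
      exact this
    · intro h
      rw [MulEquiv.coe_toMonoidHom, h, map_one]]
  rw [← MonoidHom.mem_ker, hker]


end Defs


end ExtPart

end Stmt8

/-- If `G ≤ GL_n(k)` and `H` is a normal subgroup of `G` which is closed
in the Zariski topology induced on `G` (i.e. `H` is cut out in `G` by polynomial
equations in the matrix entries), then `G/H` is linear. -/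
theorem stmt8 {k : Type} [Field k] {n : ℕ} (G : Subgroup (Matrix.GeneralLinearGroup (Fin n) k))
    (H : Subgroup ↥G) (hH : H.Normal)
    (hclosed : ∃ S : Set (MvPolynomial (Fin n × Fin n) k), ∀ g : ↥G,
      g ∈ H ↔ ∀ p ∈ S,
        MvPolynomial.eval
          (fun ij => ((g : Matrix.GeneralLinearGroup (Fin n) k) :
              Matrix (Fin n) (Fin n) k) ij.1 ij.2) p = 0) :
    IsLinearGroup (↥G ⧸ H) := by
  classical
  open Stmt8 in
  obtain ⟨W, M, hMW, hWfd, hWstab, hMstab, hMdet⟩ := Stmt8.lemB H hclosed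
  haveI := hWfd
  -- the restricted action of G on W
  set rW : ↥G → Module.End k ↥W := fun g =>
    (Stmt8.sub (Stmt8.mat G g)).toLinearMap.restrict (p := W) (q := W)
      (fun f hf => hWstab g f hf) with hrW
  have rW_apply : ∀ (g : ↥G) (f : ↥W), (rW g f : MvPolynomial (Fin n × Fin n) k)
      = Stmt8.sub (Stmt8.mat G g) ↑f := fun g f => rfl
  have rW_mul : ∀ g g' : ↥G, rW g * rW g' = rW (g * g') := by
    intro g g'
    apply LinearMap.ext
    intro f
    apply Subtype.ext
    show (rW g (rW g' f) : MvPolynomial (Fin n × Fin n) k) = ↑(rW (g * g') f)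
    rw [rW_apply, rW_apply, rW_apply, Stmt8.sub_sub, ← Stmt8.mat_mul]
  have rW_one : rW 1 = 1 := by
    apply LinearMap.ext
    intro f
    apply Subtype.ext
    show (rW 1 f : MvPolynomial (Fin n × Fin n) k) = ↑f
    rw [rW_apply, Stmt8.mat_one, Stmt8.sub_one_apply]
  set fW : ↥G →* Module.End k ↥W :=
    { toFun := rW
      map_one' := rW_one
      map_mul' := fun g g' => (rW_mul g g').symm } with hfW
  set π : ↥G →* (Module.End k ↥W)ˣ := fW.toHomUnits with hπ
  have hπcoe : ∀ g : ↥G, ((π g : Module.End k ↥W)) = rW g := fun g => rfl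
  set P : Submodule k ↥W := M.comap W.subtype with hP
  have hmemP : ∀ v : ↥W, v ∈ P ↔ (v : MvPolynomial (Fin n × Fin n) k) ∈ M := fun v => Iff.rfl
  obtain ⟨m, ρ, hker⟩ := Stmt8.lemC π H hH P
    (by
      intro g hg v hv
      rw [hmemP] at hv ⊢
      rw [hπcoe, rW_apply]
      exact hMstab g hg ↑v hv)
    (by
      intro g hg
      refine hMdet g fun f hf => ?_
      have h1 := hg ⟨f, hMW hf⟩ ((hmemP _).2 hf)
      rw [hmemP, hπcoe, rW_apply] at h1
      exact h1)
  haveI := hH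
  haveI : (MonoidHom.ker ρ).Normal := MonoidHom.normal_ker ρ
  set e := QuotientGroup.quotientMulEquivOfEq hker.symm with he
  refine ⟨k, inferInstance, m, (QuotientGroup.kerLift ρ).comp e.toMonoidHom, ?_⟩
  exact (QuotientGroup.kerLift_injective ρ).comp e.injective
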